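/- Under the assumptions of the equivalence setup, every minimizer of J₀ over U is also a minimizer of J₁ over U, provided there exists at least one minimizer of J₁ that is valued in {-1,0,1} a.e. -/

import Mathlib

open MeasureTheory Set

noncomputable def J0 (T : ℝ) (u : ℝ → ℝ) : ℝ :=
  (volume {t ∈ Icc (0:ℝ) T | u t ≠ 0}).toReal

noncomputable def J1 (T : ℝ) (u : ℝ → ℝ) : ℝ :=
  ∫ t in Icc (0:ℝ) T, |u t|

lemma J0_eq (T : ℝ) (u : ℝ → ℝ) (hu : Measurable u) :
    J0 T u = ((volume.restrict (Icc (0:ℝ) T)) {t | u t ≠ 0}).toReal := by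
  have hms : MeasurableSet {t : ℝ | u t ≠ 0} := (hu (measurableSet_singleton 0)).compl
  have h : (volume.restrict (Icc (0:ℝ) T)) {t | u t ≠ 0}
      = volume ({t | u t ≠ 0} ∩ Icc (0:ℝ) T) := Measure.restrict_apply hms
  have hset : {t | t ∈ Icc (0:ℝ) T ∧ u t ≠ 0} = {t | u t ≠ 0} ∩ Icc (0:ℝ) T := by
    ext t; simp [Set.mem_inter_iff, and_comm]
  rw [J0, h, hset]

lemma J1_le_J0 (T : ℝ) (u : ℝ → ℝ) (hu : Measurable u)
    (hb : ∀ᵐ t ∂(volume.restrict (Icc (0:ℝ) T)), |u t| ≤ 1) :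
    J1 T u ≤ J0 T u := by
  set μ := volume.restrict (Icc (0:ℝ) T)
  have h1 : J1 T u = ∫ t, min |u t| 1 ∂μ := by
    apply integral_congr_ae
    filter_upwards [hb] with t ht
    simp [min_eq_left ht]
  have h2 : ENNReal.ofReal (∫ t, min |u t| 1 ∂μ) ≤ μ {t | u t ≠ 0} := by
    apply integral_le_measure
    · intro x _; exact min_le_right _ _
    · intro x hx
      simp only [mem_compl_iff, mem_setOf_eq, not_not] at hx
      simp [hx]
  have hfin : μ {t | u t ≠ 0} ≠ ⊤ := by
    exact ((measure_mono (subset_univ _)).trans_lt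
      (by simp [μ, Measure.restrict_apply_univ])).ne
  have h3 : ∫ t, min |u t| 1 ∂μ ≤ (μ {t | u t ≠ 0}).toReal := by
    by_cases h0 : 0 ≤ ∫ t, min |u t| 1 ∂μ
    · have := ENNReal.toReal_mono hfin h2
      rwa [ENNReal.toReal_ofReal h0] at this
    · exact (le_of_not_ge h0).trans ENNReal.toReal_nonneg
  rw [h1, J0_eq T u hu]
  exact h3

lemma J1_eq_J0 (T : ℝ) (u : ℝ → ℝ) (hu : Measurable u)
    (hv : ∀ᵐ t ∂(volume.restrict (Icc (0:ℝ) T)), u t ∈ ({-1, 0, 1} : Set ℝ)) :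
    J1 T u = J0 T u := by
  set μ := volume.restrict (Icc (0:ℝ) T)
  have hms : MeasurableSet {t | u t ≠ 0} := (hu (measurableSet_singleton 0)).compl
  have h1 : J1 T u = ∫ t, ({t | u t ≠ 0}).indicator 1 t ∂μ := by
    apply integral_congr_ae
    filter_upwards [hv] with t ht
    simp only [mem_insert_iff, mem_singleton_iff] at ht
    rcases ht with h | h | h <;> simp [Set.indicator_apply, h]
  rw [h1, integral_indicator_one hms, J0_eq T u hu]
  rfl

theorem L0_min_subset_L1_min (T : ℝ) (hT : 0 < T) (U : Set (ℝ → ℝ))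
    (hU : ∀ u ∈ U, Measurable u ∧ (∀ᵐ t ∂(volume.restrict (Icc (0:ℝ) T)), |u t| ≤ 1))
    (hex : ∃ u1 ∈ {u ∈ U | ∀ v ∈ U, J1 T u ≤ J1 T v},
      ∀ᵐ t ∂(volume.restrict (Icc (0:ℝ) T)), u1 t ∈ ({-1, 0, 1} : Set ℝ)) :
    {u ∈ U | ∀ v ∈ U, J0 T u ≤ J0 T v} ⊆ {u ∈ U | ∀ v ∈ U, J1 T u ≤ J1 T v} := by
  obtain ⟨u1, ⟨hu1U, hu1min⟩, hu1val⟩ := hex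
  intro u0 ⟨hu0U, hu0min⟩
  refine ⟨hu0U, fun v hv => ?_⟩
  obtain ⟨hu0m, hu0b⟩ := hU u0 hu0U
  obtain ⟨hu1m, _⟩ := hU u1 hu1U
  calc J1 T u0 ≤ J0 T u0 := J1_le_J0 T u0 hu0m hu0b
    _ ≤ J0 T u1 := hu0min u1 hu1U
    _ = J1 T u1 := (J1_eq_J0 T u1 hu1m hu1val).symm
    _ ≤ J1 T v := hu1min v hv
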